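/- The generating function for plane partitions in the box B(a,b,c) can be written as a principal specialization of a Schur function: Σ_P q^{|P|} = q^{-b·a(a+1)/2} · s_{b^a}(q^{a+c}, q^{a+c-1}, ..., q), where b^a is the rectangular partition with a parts each equal to b. -/

import Mathlib

open scoped Classical

noncomputable section

/-- Cells of the Young diagram of `f : Fin r → ℕ` (viewed as a partition with at most
`r` parts, row `i` having length `f i`). -/
def pcells {r : ℕ} (f : Fin r → ℕ) : Finset (Fin r × ℕ) :=
  (Finset.univ ×ˢ Finset.range (Finset.univ.sup f)).filter (fun p => p.2 < f p.1)

/-- `T` is a semistandard filling of the diagram of `f` with entries in `Fin n`: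
rows weakly increase, columns strictly increase. -/
def IsSSYT {r n : ℕ} (f : Fin r → ℕ) (T : {x // x ∈ pcells f} → Fin n) : Prop :=
  (∀ p q : {x // x ∈ pcells f},
      p.val.1 = q.val.1 → p.val.2 ≤ q.val.2 → T p ≤ T q) ∧
  (∀ p q : {x // x ∈ pcells f},
      p.val.2 = q.val.2 → p.val.1 < q.val.1 → T p < T q)

/-- The Schur polynomial `s_f(x_1, …, x_n)`, defined combinatorially as the sum over
semistandard Young tableaux of shape `f` with entries in `{1, …, n}` of their weights. -/
def schurPoly {r : ℕ} (f : Fin r → ℕ) (n : ℕ) : MvPolynomial (Fin n) ℤ :=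
  ∑ T ∈ Finset.univ.filter (fun T : {x // x ∈ pcells f} → Fin n => IsSSYT f T),
    ∏ c : {x // x ∈ pcells f}, MvPolynomial.X (T c)

/-- The `j`-th part (`j` counted from `0`) of the conjugate of the partition `f`. -/
def conjPart {r : ℕ} (f : Fin r → ℕ) (j : ℕ) : ℕ :=
  (Finset.univ.filter (fun i => j < f i)).card

/-- The finset of partitions with at most `n` parts and size at most `m`. -/
def partitionsLE (n m : ℕ) : Finset (Fin n → ℕ) :=
  (Fintype.piFinset fun _ => Finset.range (m + 1)).filter
    (fun f => (∀ i j : Fin n, i ≤ j → f j ≤ f i) ∧ ∑ i, f i ≤ m)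

-- aux lemmas
lemma mem_pcells_rect {a b : ℕ} (p : Fin a × ℕ) :
    p ∈ pcells (fun _ : Fin a => b) ↔ p.2 < b := by
  simp only [pcells, Finset.mem_filter, Finset.mem_product, Finset.mem_univ, true_and,
    Finset.mem_range]
  constructor
  · exact fun h => h.2
  · intro h
    exact ⟨lt_of_lt_of_le h (Finset.le_sup (f := fun _ : Fin a => b) (Finset.mem_univ p.1)), h⟩

lemma gauss_rev_two (a : ℕ) : (∑ i : Fin a, (a - (i : ℕ))) * 2 = a * (a + 1) := by
  induction a with
  | zero => simp
  | succ n ih =>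
    rw [Fin.sum_univ_eq_sum_range] at ih ⊢
    rw [Finset.sum_range_succ]
    have h1 : ∀ i ∈ Finset.range n, (n + 1 - i) = (n - i) + 1 := by
      intro i hi; simp at hi; omega
    rw [Finset.sum_congr rfl h1, Finset.sum_add_distrib, Finset.sum_const,
      Finset.card_range, smul_eq_mul, mul_one]
    calc (∑ i ∈ Finset.range n, (n - i) + n + (n + 1 - n)) * 2
        = (∑ i ∈ Finset.range n, (n - i)) * 2 + (n + (n + 1 - n)) * 2 := by ring
      _ = n * (n + 1) + (n + (n + 1 - n)) * 2 := by rw [ih]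
      _ = (n + 1) * (n + 1 + 1) := by
          have h2 : n + 1 - n = 1 := by omega
          rw [h2]; ring

lemma gauss_rev (a : ℕ) : ∑ i : Fin a, (a - (i : ℕ)) = a * (a + 1) / 2 := by
  have := gauss_rev_two a
  omega

lemma ssyt_chain {a b n : ℕ} {T : {x // x ∈ pcells (fun _ : Fin a => b)} → Fin n}
    (hT : IsSSYT (fun _ : Fin a => b) T) (d : ℕ) :
    ∀ p q : {x // x ∈ pcells (fun _ : Fin a => b)}, p.val.2 = q.val.2 →
      (q.val.1 : ℕ) = (p.val.1 : ℕ) + d → (T p : ℕ) + d ≤ (T q : ℕ) := by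
  induction d with
  | zero =>
    intro p q h2 h1
    have : p = q := by
      apply Subtype.ext; apply Prod.ext
      · exact Fin.ext (by omega)
      · exact h2
    rw [this]; omega
  | succ m ih =>
    intro p q h2 h1
    have hj : p.val.2 < b := (mem_pcells_rect _).1 p.2
    have hm : (p.val.1 : ℕ) + m < a := by have := q.val.1.isLt; omega
    set r : {x // x ∈ pcells (fun _ : Fin a => b)} :=
      ⟨(⟨(p.val.1 : ℕ) + m, hm⟩, p.val.2), (mem_pcells_rect _).2 hj⟩ with hr
    have h3 := ih p r rfl rfl
    have h4 : (T r : ℕ) < (T q : ℕ) := hT.2 r q h2 (by simp only [hr, Fin.lt_def]; omega)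
    omega

lemma ssyt_lb {a b n : ℕ} {T : {x // x ∈ pcells (fun _ : Fin a => b)} → Fin n}
    (hT : IsSSYT (fun _ : Fin a => b) T) (p : {x // x ∈ pcells (fun _ : Fin a => b)}) :
    (p.val.1 : ℕ) ≤ (T p : ℕ) := by
  have hj : p.val.2 < b := (mem_pcells_rect _).1 p.2
  have h0 : (0 : ℕ) < a := p.val.1.pos  -- maybe wrong name
  have := ssyt_chain hT (p.val.1 : ℕ)
    ⟨(⟨0, by omega⟩, p.val.2), (mem_pcells_rect _).2 hj⟩ p rfl (by simp)
  omega

lemma ssyt_ub {a b n : ℕ} {T : {x // x ∈ pcells (fun _ : Fin a => b)} → Fin n}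
    (hT : IsSSYT (fun _ : Fin a => b) T) (p : {x // x ∈ pcells (fun _ : Fin a => b)}) :
    (T p : ℕ) + (a - 1 - (p.val.1 : ℕ)) ≤ n - 1 := by
  have hj : p.val.2 < b := (mem_pcells_rect _).1 p.2
  have hia := p.val.1.isLt
  have h := ssyt_chain hT (a - 1 - (p.val.1 : ℕ)) p
    ⟨(⟨a - 1, by omega⟩, p.val.2), (mem_pcells_rect _).2 hj⟩ rfl (by simp; omega)
  have := Fin.is_lt (T ⟨(⟨a - 1, by omega⟩, p.val.2), (mem_pcells_rect _).2 hj⟩)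
  omega

end

noncomputable section Main

def ppToT {a b c : ℕ} (π : Fin a → Fin b → Fin (c + 1)) :
    {x // x ∈ pcells (fun _ : Fin a => b)} → Fin (a + c) :=
  fun p => ⟨(p.val.1 : ℕ) + (c - (π p.val.1 ⟨p.val.2, (mem_pcells_rect _).1 p.2⟩ : ℕ)),
    by have := p.val.1.isLt; omega⟩

def tToPP {a b c : ℕ} (T : {x // x ∈ pcells (fun _ : Fin a => b)} → Fin (a + c)) :
    Fin a → Fin b → Fin (c + 1) :=
  fun i j => ⟨min c (c + (i : ℕ) - (T ⟨(i, (j : ℕ)), (mem_pcells_rect _).2 j.isLt⟩ : ℕ)),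
    by omega⟩

def cellEquiv {a b : ℕ} : {x // x ∈ pcells (fun _ : Fin a => b)} ≃ Fin a × Fin b where
  toFun p := (p.val.1, ⟨p.val.2, (mem_pcells_rect _).1 p.2⟩)
  invFun q := ⟨(q.1, (q.2 : ℕ)), (mem_pcells_rect _).2 q.2.isLt⟩
  left_inv p := Subtype.ext rfl
  right_inv q := rfl

lemma pi_le {a b c : ℕ} (π : Fin a → Fin b → Fin (c + 1)) (i j) : (π i j : ℕ) ≤ c :=
  Nat.lt_succ_iff.mp (π i j).isLt

lemma ppToT_isSSYT {a b c : ℕ} (π : Fin a → Fin b → Fin (c + 1))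
    (h1 : ∀ i i' j, i ≤ i' → (π i' j : ℕ) ≤ π i j)
    (h2 : ∀ i j j', j ≤ j' → (π i j' : ℕ) ≤ π i j) :
    IsSSYT (fun _ : Fin a => b) (ppToT π) := by
  constructor
  · intro p q hpq hj
    obtain ⟨⟨ip, jp⟩, hp⟩ := p
    obtain ⟨⟨iq, jq⟩, hq⟩ := q
    simp only at hpq hj
    subst hpq
    rw [Fin.le_def]
    simp only [ppToT]
    have := h2 ip ⟨jp, (mem_pcells_rect _).1 hp⟩ ⟨jq, (mem_pcells_rect _).1 hq⟩ hj
    omega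
  · intro p q hpq hij
    obtain ⟨⟨ip, jp⟩, hp⟩ := p
    obtain ⟨⟨iq, jq⟩, hq⟩ := q
    simp only at hpq hij
    subst hpq
    rw [Fin.lt_def]
    simp only [ppToT]
    have := h1 ip iq ⟨jp, (mem_pcells_rect _).1 hp⟩ (le_of_lt hij)
    have h3 := pi_le π iq ⟨jp, (mem_pcells_rect _).1 hp⟩
    rw [Fin.lt_def] at hij
    omega

lemma tToPP_val {a b c : ℕ} (T : {x // x ∈ pcells (fun _ : Fin a => b)} → Fin (a + c))
    (hT : IsSSYT (fun _ : Fin a => b) T) (i : Fin a) (j : Fin b) :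
    (tToPP T i j : ℕ) =
      c + (i : ℕ) - (T ⟨(i, (j : ℕ)), (mem_pcells_rect _).2 j.isLt⟩ : ℕ) := by
  have hlb := ssyt_lb hT ⟨(i, (j : ℕ)), (mem_pcells_rect _).2 j.isLt⟩
  simp only at hlb
  simp only [tToPP]
  omega

lemma tToPP_cond {a b c : ℕ} (T : {x // x ∈ pcells (fun _ : Fin a => b)} → Fin (a + c))
    (hT : IsSSYT (fun _ : Fin a => b) T) :
    (∀ i i' j, i ≤ i' → (tToPP T i' j : ℕ) ≤ tToPP T i j) ∧
      ∀ i j j', j ≤ j' → (tToPP T i j' : ℕ) ≤ tToPP T i j := by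
  constructor
  · intro i i' j hii
    rw [tToPP_val T hT, tToPP_val T hT]
    have hch := ssyt_chain hT ((i' : ℕ) - (i : ℕ))
      ⟨((i : Fin a), (j : ℕ)), (mem_pcells_rect _).2 j.isLt⟩
      ⟨((i' : Fin a), (j : ℕ)), (mem_pcells_rect _).2 j.isLt⟩ rfl (by simp; omega)
    omega
  · intro i j j' hjj
    rw [tToPP_val T hT, tToPP_val T hT]
    have := hT.1 ⟨((i : Fin a), (j : ℕ)), (mem_pcells_rect _).2 j.isLt⟩
      ⟨((i : Fin a), (j' : ℕ)), (mem_pcells_rect _).2 j'.isLt⟩ rfl (by simpa using hjj)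
    rw [Fin.le_def] at this
    omega

lemma left_inv_pp {a b c : ℕ} (π : Fin a → Fin b → Fin (c + 1))
    (h1 : ∀ i i' j, i ≤ i' → (π i' j : ℕ) ≤ π i j)
    (h2 : ∀ i j j', j ≤ j' → (π i j' : ℕ) ≤ π i j) :
    tToPP (ppToT π) = π := by
  funext i j
  have hval := tToPP_val (ppToT π) (ppToT_isSSYT π h1 h2) i j
  apply Fin.ext
  rw [hval]
  simp only [ppToT]
  have := pi_le π i j
  have h3 : (⟨(j : ℕ), (mem_pcells_rect ((i, (j:ℕ)) : Fin a × ℕ)).1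
      ((mem_pcells_rect _).2 j.isLt)⟩ : Fin b) = j := Fin.ext rfl
  rw [h3]
  omega

lemma right_inv_pp {a b c : ℕ} (T : {x // x ∈ pcells (fun _ : Fin a => b)} → Fin (a + c))
    (hT : IsSSYT (fun _ : Fin a => b) T) :
    ppToT (tToPP T) = T := by
  funext p
  obtain ⟨⟨i, j⟩, hp⟩ := p
  have hj : j < b := (mem_pcells_rect _).1 hp
  apply Fin.ext
  simp only [ppToT]
  rw [tToPP_val T hT i ⟨j, hj⟩]
  have hlb := ssyt_lb hT ⟨(i, j), hp⟩
  have hub := ssyt_ub hT ⟨(i, j), hp⟩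
  have hcell : (⟨(i, ((⟨j, hj⟩ : Fin b) : ℕ)),
      (mem_pcells_rect _).2 (Fin.isLt (⟨j, hj⟩ : Fin b))⟩ :
      {x // x ∈ pcells (fun _ : Fin a => b)}) = ⟨(i, j), hp⟩ := Subtype.ext rfl
  rw [hcell]
  simp only at hlb hub
  have hia := i.isLt
  omega

lemma weight_eq {a b c : ℕ} (π : Fin a → Fin b → Fin (c + 1)) :
    ∑ p : {x // x ∈ pcells (fun _ : Fin a => b)}, (a + c - (ppToT π p : ℕ)) =
      b * (a * (a + 1) / 2) + ∑ i, ∑ j, (π i j : ℕ) := by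
  rw [← Equiv.sum_comp (cellEquiv (a := a) (b := b)).symm
    (fun p => a + c - (ppToT π p : ℕ)), Fintype.sum_prod_type]
  have hstep : ∀ i : Fin a, ∀ j : Fin b,
      (a + c - (ppToT π ((cellEquiv).symm (i, j)) : ℕ)) = (a - (i : ℕ)) + (π i j : ℕ) := by
    intro i j
    simp only [cellEquiv, Equiv.coe_fn_symm_mk, ppToT]
    have h3 : (⟨(j : ℕ), (mem_pcells_rect ((i, (j:ℕ)) : Fin a × ℕ)).1
        ((mem_pcells_rect _).2 j.isLt)⟩ : Fin b) = j := Fin.ext rfl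
    rw [h3]
    have := pi_le π i j
    have := i.isLt
    omega
  calc ∑ i : Fin a, ∑ j : Fin b, (a + c - (ppToT π ((cellEquiv).symm (i, j)) : ℕ))
      = ∑ i : Fin a, ∑ j : Fin b, ((a - (i : ℕ)) + (π i j : ℕ)) := by
        exact Finset.sum_congr rfl fun i _ => Finset.sum_congr rfl fun j _ => hstep i j
    _ = ∑ i : Fin a, (b * (a - (i : ℕ)) + ∑ j, (π i j : ℕ)) := by
        refine Finset.sum_congr rfl fun i _ => ?_
        rw [Finset.sum_add_distrib, Finset.sum_const, Finset.card_univ, Fintype.card_fin,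
          smul_eq_mul]
    _ = b * (a * (a + 1) / 2) + ∑ i, ∑ j, (π i j : ℕ) := by
        rw [Finset.sum_add_distrib, ← Finset.mul_sum, gauss_rev]



/-- The generating function for plane partitions in the box `B(a,b,c)` is a principal
specialization of a Schur function:
`Σ_P q^{|P|} = q^{-b·a(a+1)/2} · s_{b^a}(q^{a+c}, q^{a+c-1}, …, q)`,
where `b^a` is the rectangular partition with `a` parts all equal to `b`, and the Schur
polynomial is in `a + c` variables.  The negative power of `q` is cleared by
multiplying both sides by `q^{b·a(a+1)/2}`. -/
theorem macmahon_schur_specialization (a b c : ℕ) :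
    (Polynomial.X : Polynomial ℤ) ^ (b * (a * (a + 1) / 2)) *
      (∑ π : {π : Fin a → Fin b → Fin (c + 1) //
          (∀ i i' j, i ≤ i' → (π i' j : ℕ) ≤ π i j) ∧
          ∀ i j j', j ≤ j' → (π i j' : ℕ) ≤ π i j},
        (Polynomial.X : Polynomial ℤ) ^ (∑ i, ∑ j, (π.val i j : ℕ))) =
    MvPolynomial.eval₂ (Polynomial.C : ℤ →+* Polynomial ℤ)
      (fun l : Fin (a + c) => (Polynomial.X : Polynomial ℤ) ^ (a + c - (l : ℕ)))
      (schurPoly (fun _ : Fin a => b) (a + c)) := by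
  rw [schurPoly, MvPolynomial.eval₂_sum, Finset.mul_sum]
  have hrhs : ∀ T : {x // x ∈ pcells (fun _ : Fin a => b)} → Fin (a + c),
      MvPolynomial.eval₂ (Polynomial.C : ℤ →+* Polynomial ℤ)
        (fun l : Fin (a + c) => (Polynomial.X : Polynomial ℤ) ^ (a + c - (l : ℕ)))
        (∏ p : {x // x ∈ pcells (fun _ : Fin a => b)}, MvPolynomial.X (T p)) =
      (Polynomial.X : Polynomial ℤ) ^ (∑ p : {x // x ∈ pcells (fun _ : Fin a => b)},
        (a + c - (T p : ℕ))) := by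
    intro T
    rw [MvPolynomial.eval₂_prod, ← Finset.prod_pow_eq_pow_sum]
    exact Finset.prod_congr rfl fun p _ => by rw [MvPolynomial.eval₂_X]
  rw [Finset.sum_congr rfl fun T _ => hrhs T]
  refine Finset.sum_bij' (fun π _ => ppToT π.val)
    (fun T hT => ⟨tToPP T, tToPP_cond T (Finset.mem_filter.1 hT).2⟩) ?_ ?_ ?_ ?_ ?_
  · intro π _
    exact Finset.mem_filter.2 ⟨Finset.mem_univ _, ppToT_isSSYT π.val π.2.1 π.2.2⟩
  · intro T hT
    exact Finset.mem_univ _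
  · intro π _
    exact Subtype.ext (left_inv_pp π.val π.2.1 π.2.2)
  · intro T hT
    exact right_inv_pp T (Finset.mem_filter.1 hT).2
  · intro π _
    rw [← pow_add, weight_eq]


end Main
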